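/- Let k ≥ 2, r ≥ 2, t ≥ 1 and set n = ⌊(k-1)/(r-1)⌋ · (r-1)t. There is a red-blue coloring of the edges of the complete r-uniform hypergraph on n vertices with no k vertices all of whose r-subsets are red and no blue copy of any r-uniform hypertree with t edges. -/

import Mathlib

open Finset

structure FinHypergraph (V : Type*) where
  edges : Finset (Finset V)

namespace FinHypergraph

variable {V : Type*} [DecidableEq V]

/-- `H` is `r`-uniform: every edge has exactly `r` vertices. -/
def Uniform (H : FinHypergraph V) (r : ℕ) : Prop := ∀ e ∈ H.edges, e.card = r

/-- Two vertices are adjacent if some edge contains both. -/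
def adj (H : FinHypergraph V) (u w : V) : Prop := ∃ e ∈ H.edges, u ∈ e ∧ w ∈ e

/-- `H` is connected: any two vertices are joined by a walk. -/
def Connected (H : FinHypergraph V) : Prop := ∀ u w : V, Relation.ReflTransGen H.adj u w

/-- No two distinct edges intersect in more than one vertex. -/
def Linear (H : FinHypergraph V) : Prop :=
  ∀ e ∈ H.edges, ∀ f ∈ H.edges, e ≠ f → (e ∩ f).card ≤ 1

/-- A Berge cycle: distinct vertices `v 0, …, v (k-1)` and distinct edges
`e 0, …, e (k-1)`, `k ≥ 2`, with `{v i, v (i+1)} ⊆ e i` cyclically. -/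
def HasBergeCycle (H : FinHypergraph V) : Prop :=
  ∃ k : ℕ, ∃ _ : 2 ≤ k, ∃ (v : Fin k → V) (e : Fin k → Finset V),
    Function.Injective v ∧ Function.Injective e ∧
    (∀ i, e i ∈ H.edges) ∧
    (∀ i : Fin k, v i ∈ e i ∧ v ⟨(i.val + 1) % k, Nat.mod_lt _ (by omega)⟩ ∈ e i)

/-- A hypertree: connected, linear, with no Berge cycle. -/
def IsHypertree (H : FinHypergraph V) : Prop :=
  H.Connected ∧ H.Linear ∧ ¬ H.HasBergeCycle

/-- A proper coloring: no edge is monochromatic. -/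
def Proper (H : FinHypergraph V) {k : ℕ} (c : V → Fin k) : Prop :=
  ∀ e ∈ H.edges, ¬ ∀ u ∈ e, ∀ w ∈ e, c u = c w

/-- The chromatic number: least number of colors in a proper coloring. -/
noncomputable def chromaticNumber (H : FinHypergraph V) : ℕ :=
  sInf {k | ∃ c : V → Fin k, H.Proper c}

/-- `H` contains a copy of `T`: an injective vertex map sending edges to edges. -/
def ContainsCopy {W : Type*} [DecidableEq W] (H : FinHypergraph V) (T : FinHypergraph W) : Prop :=
  ∃ φ : W → V, Function.Injective φ ∧ ∀ e ∈ T.edges, e.image φ ∈ H.edges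

end FinHypergraph

/-- The complete `r`-uniform hypergraph on `Fin n`. -/
def completeHypergraph (n r : ℕ) : FinHypergraph (Fin n) :=
  ⟨Finset.univ.powersetCard r⟩

set_option linter.unusedSectionVars false
set_option maxHeartbeats 1000000

section IncGraph

open SimpleGraph Sum

variable {W : Type} [Fintype W] [DecidableEq W]

def incAdj (T : FinHypergraph W) : W ⊕ {e // e ∈ T.edges} → W ⊕ {e // e ∈ T.edges} → Prop
  | inl w, inr e => w ∈ e.1
  | inr e, inl w => w ∈ e.1
  | _, _ => False

def incGraph (T : FinHypergraph W) : SimpleGraph (W ⊕ {e // e ∈ T.edges}) where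
  Adj := incAdj T
  symm := ⟨by rintro (w|e) (w'|e') h <;> simp_all [incAdj]⟩
  loopless := ⟨by rintro (w|e) h <;> simp_all [incAdj]⟩

instance (T : FinHypergraph W) : DecidableRel (incGraph T).Adj := fun a b =>
  match a, b with
  | inl w, inr e => (inferInstance : Decidable (w ∈ e.1))
  | inr e, inl w => (inferInstance : Decidable (w ∈ e.1))
  | inl _, inl _ => .isFalse id
  | inr _, inr _ => .isFalse id

def vside {T : FinHypergraph W} : W ⊕ {e // e ∈ T.edges} → Bool :=
  Sum.elim (fun _ => false) (fun _ => true)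

variable {T : FinHypergraph W}

lemma incAdj_side {a b} (h : (incGraph T).Adj a b) : vside b = !vside a := by
  cases a <;> cases b <;> simp_all [incGraph, incAdj, vside]

lemma getVert_side {a b} (p : (incGraph T).Walk a b) :
    ∀ i : ℕ, i ≤ p.length → vside (p.getVert i) = xor (vside a) (decide (i % 2 = 1)) := by
  induction p with
  | nil => intro i hi; simp at hi; subst hi; simp
  | cons h q ih =>
    intro i hi
    match i with
    | 0 => simp
    | (j+1) =>
      rw [SimpleGraph.Walk.getVert_cons_succ]
      rw [ih j (by simpa using Nat.lt_succ_iff.mp (by simpa [SimpleGraph.Walk.length_cons] using Nat.lt_succ_of_le hi))]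
      rw [incAdj_side h]
      have h2 : ((j+1) % 2 = 1) ↔ ¬ (j % 2 = 1) := by omega
      rcases Nat.mod_two_eq_zero_or_one j with hj | hj <;>
        simp [hj, Nat.add_mod] <;> cases vside a <;> simp

lemma support_get_getVert {V' : Type*} {G : SimpleGraph V'} {a b : V'} (p : G.Walk a b) :
    ∀ (i : ℕ) (h : i < p.support.length), p.support.get ⟨i, h⟩ = p.getVert i := by
  induction p with
  | nil => intro i h; simp at h; subst h; simp
  | cons hadj q ih =>
    intro i h
    match i with
    | 0 => simp
    | (j+1) =>
      rw [SimpleGraph.Walk.getVert_cons_succ]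
      have h' : j < q.support.length := by simpa using h
      rw [← ih j h']
      simp [SimpleGraph.Walk.support_cons]

lemma cycle_getVert_inj {V' : Type*} {G : SimpleGraph V'} {u : V'} {c : G.Walk u u}
    (hc : c.IsCycle) {i j : ℕ} (hi : i < c.length) (hj : j < c.length)
    (h : c.getVert i = c.getVert j) : i = j := by
  have hlen : c.support.length = c.length + 1 := by simp [SimpleGraph.Walk.length_support]
  have htail : c.support.tail.Nodup := hc.support_nodup
  have htl : c.support.tail.length = c.length := by
    simp [List.length_tail, hlen]
  -- tail.get ⟨a⟩ = getVert (a+1)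
  have hget : ∀ (a : ℕ) (ha : a < c.support.tail.length),
      c.support.tail.get ⟨a, ha⟩ = c.getVert (a + 1) := by
    intro a ha
    have ha' : a + 1 < c.support.length := by omega
    rw [← support_get_getVert c (a+1) ha']
    exact List.get_tail _ _ _ _
  have key : ∀ (a b : ℕ), 1 ≤ a → a ≤ c.length → 1 ≤ b → b ≤ c.length →
      c.getVert a = c.getVert b → a = b := by
    intro a b ha1 ha2 hb1 hb2 hab
    have haa : a - 1 < c.support.tail.length := by omega
    have hbb : b - 1 < c.support.tail.length := by omega
    have e1 : c.support.tail.get ⟨a-1, haa⟩ = c.support.tail.get ⟨b-1, hbb⟩ := by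
      rw [hget, hget]
      have : a - 1 + 1 = a := by omega
      rw [this]
      have : b - 1 + 1 = b := by omega
      rw [this]
      exact hab
    have := (List.Nodup.get_inj_iff htail).mp e1
    have := Fin.val_eq_of_eq this
    simp at this; omega
  rcases Nat.eq_zero_or_pos i with hi0 | hip
  · rcases Nat.eq_zero_or_pos j with hj0 | hjp
    · omega
    · subst hi0
      have : c.getVert j = c.getVert c.length := by
        rw [SimpleGraph.Walk.getVert_length, ← h]; exact SimpleGraph.Walk.getVert_zero c
      have := key j c.length hjp (by omega) (by have := hc.three_le_length; omega) le_rfl this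
      omega
  · rcases Nat.eq_zero_or_pos j with hj0 | hjp
    · subst hj0
      have : c.getVert i = c.getVert c.length := by
        rw [SimpleGraph.Walk.getVert_length, h]; exact SimpleGraph.Walk.getVert_zero c
      have := key i c.length hip (by omega) (by have := hc.three_le_length; omega) le_rfl this
      omega
    · exact key i j hip (by omega) hjp (by omega) h

lemma berge_of_cycle_at_inl (hT3 : ¬ T.HasBergeCycle) {w₀ : W}
    (c : (incGraph T).Walk (Sum.inl w₀) (Sum.inl w₀)) (hc : c.IsCycle) : False := by
  have hL3 : 3 ≤ c.length := hc.three_le_length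
  have hside : ∀ i : ℕ, i ≤ c.length → vside (c.getVert i) = decide (i % 2 = 1) := by
    intro i hi
    rw [getVert_side c i hi]
    simp [vside]
  have hLeven : c.length % 2 = 0 := by
    have := hside c.length le_rfl
    rw [SimpleGraph.Walk.getVert_length] at this
    simp [vside] at this
    omega
  set L := c.length with hLdef
  set m := L / 2 with hmdef
  have hm : L = 2 * m := by omega
  have hm2 : 2 ≤ m := by omega
  obtain ⟨ed, hed⟩ : ∃ ed, c.getVert 1 = Sum.inr ed := by
    have := hside 1 (by omega)
    cases h : c.getVert 1 with
    | inl a => rw [h] at this; simp [vside] at this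
    | inr b => exact ⟨b, rfl⟩
  set v : Fin m → W := fun i => Sum.elim id (fun _ => w₀) (c.getVert (2*i.val)) with hvdef
  set eS : Fin m → {e // e ∈ T.edges} :=
    fun i => Sum.elim (fun _ => ed) id (c.getVert (2*i.val+1)) with heSdef
  have hv : ∀ i : Fin m, c.getVert (2*i.val) = Sum.inl (v i) := by
    intro i
    have hle : 2*i.val ≤ L := by have := i.2; omega
    have := hside (2*i.val) hle
    cases h : c.getVert (2*i.val) with
    | inl a => simp [hvdef, h]
    | inr b => rw [h] at this; simp [vside] at this; try omega
  have he : ∀ i : Fin m, c.getVert (2*i.val+1) = Sum.inr (eS i) := by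
    intro i
    have hle : 2*i.val+1 ≤ L := by have := i.2; omega
    have := hside (2*i.val+1) hle
    cases h : c.getVert (2*i.val+1) with
    | inl a => rw [h] at this; simp [vside] at this; try omega
    | inr b => simp [heSdef, h]
  have hmem1 : ∀ i : Fin m, v i ∈ (eS i).1 := by
    intro i
    have hadj := c.adj_getVert_succ (i := 2*i.val) (by have := i.2; omega)
    rw [hv i, he i] at hadj
    exact hadj
  have hmem2 : ∀ i : Fin m, v ⟨(i.val+1) % m, Nat.mod_lt _ (by omega)⟩ ∈ (eS i).1 := by
    intro i
    have hadj := c.adj_getVert_succ (i := 2*i.val+1) (by have := i.2; omega)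
    rw [he i] at hadj
    by_cases hlast : i.val + 1 = m
    · have h2 : 2*i.val + 1 + 1 = L := by omega
      rw [h2, SimpleGraph.Walk.getVert_length] at hadj
      have hidx : (i.val+1) % m = 0 := by rw [hlast]; exact Nat.mod_self m
      have hv0 : v ⟨(i.val+1) % m, Nat.mod_lt _ (by omega)⟩ = w₀ := by
        simp only [hvdef]
        rw [show 2 * ((i.val + 1) % m) = 0 by simp [hidx]]
        simp
      rw [hv0]
      exact hadj
    · have hlt : i.val + 1 < m := by omega
      have hgv := hv ⟨i.val+1, hlt⟩
      have h2 : 2*i.val + 1 + 1 = 2*(i.val+1) := by ring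
      rw [h2, hgv] at hadj
      have hfin : (⟨(i.val+1) % m, Nat.mod_lt _ (by omega)⟩ : Fin m) = ⟨i.val+1, hlt⟩ :=
        Fin.ext (Nat.mod_eq_of_lt hlt)
      rw [hfin]
      exact hadj
  have hinjv : Function.Injective v := by
    intro i j hij
    have h1 : c.getVert (2*i.val) = c.getVert (2*j.val) := by rw [hv i, hv j, hij]
    have := cycle_getVert_inj hc (i := 2*i.val) (j := 2*j.val)
      (by have := i.2; omega) (by have := j.2; omega) h1
    exact Fin.ext (by omega)
  have hinje : Function.Injective (fun i => (eS i).1) := by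
    intro i j hij
    have h0 : eS i = eS j := Subtype.ext hij
    have h1 : c.getVert (2*i.val+1) = c.getVert (2*j.val+1) := by rw [he i, he j, h0]
    have := cycle_getVert_inj hc (i := 2*i.val+1) (j := 2*j.val+1)
      (by have := i.2; omega) (by have := j.2; omega) h1
    exact Fin.ext (by omega)
  exact hT3 ⟨m, by omega, v, fun i => (eS i).1, hinjv, hinje,
    fun i => (eS i).2, fun i => ⟨hmem1 i, hmem2 i⟩⟩

lemma inc_isAcyclic (hT3 : ¬ T.HasBergeCycle) : (incGraph T).IsAcyclic := by
  rintro (w₀ | e₀) c hc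
  · exact berge_of_cycle_at_inl hT3 c hc
  · obtain ⟨w₀, hw⟩ : ∃ w₀, c.getVert 1 = Sum.inl w₀ := by
      have hL3 : 3 ≤ c.length := hc.three_le_length
      have := getVert_side c 1 (by omega)
      cases h : c.getVert 1 with
      | inl a => exact ⟨a, rfl⟩
      | inr b => rw [h] at this; simp [vside] at this
    have hmem : Sum.inl w₀ ∈ c.support := by
      rw [SimpleGraph.Walk.mem_support_iff_exists_getVert]
      exact ⟨1, hw, by have := hc.three_le_length; omega⟩
    exact berge_of_cycle_at_inl hT3 (c.rotate _ hmem) (hc.rotate hmem)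

lemma inc_reach_inl {u w : W} (h : Relation.ReflTransGen T.adj u w) :
    (incGraph T).Reachable (Sum.inl u) (Sum.inl w) := by
  induction h with
  | refl => exact SimpleGraph.Reachable.refl _
  | @tail b c _ hbc ih =>
    obtain ⟨e, he, hb, hcc⟩ := hbc
    have h1 : (incGraph T).Adj (Sum.inl b) (Sum.inr ⟨e, he⟩) := hb
    have h2 : (incGraph T).Adj (Sum.inr ⟨e, he⟩) (Sum.inl c) := hcc
    exact ih.trans (h1.reachable.trans h2.reachable)

lemma inc_connected (hc : T.Connected) (hne : ∀ e ∈ T.edges, e.Nonempty)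
    (hts : T.edges.Nonempty) : (incGraph T).Connected := by
  have toInl : ∀ a : W ⊕ {e // e ∈ T.edges}, ∃ w, (incGraph T).Reachable a (Sum.inl w) := by
    rintro (w | e)
    · exact ⟨w, SimpleGraph.Reachable.refl _⟩
    · obtain ⟨w, hw⟩ := hne e.1 e.2
      exact ⟨w, SimpleGraph.Adj.reachable (show (incGraph T).Adj (Sum.inr e) (Sum.inl w) from hw)⟩
  rw [SimpleGraph.connected_iff]
  constructor
  · intro a b
    obtain ⟨wa, ha⟩ := toInl a
    obtain ⟨wb, hb⟩ := toInl b
    exact ha.trans ((inc_reach_inl (hc wa wb)).trans hb.symm)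
  · obtain ⟨e, he⟩ := hts
    exact ⟨Sum.inr ⟨e, he⟩⟩

lemma inc_edge_count (T : FinHypergraph W) :
    (incGraph T).edgeFinset.card = ∑ e ∈ T.edges, e.card := by
  classical
  have hbij : (T.edges.attach.sigma fun e => e.1).card = (incGraph T).edgeFinset.card := by
    apply Finset.card_bij (fun p _ => s(Sum.inl p.2, Sum.inr p.1))
    · rintro ⟨e, w⟩ hp
      rw [Finset.mem_sigma] at hp
      rw [SimpleGraph.mem_edgeFinset, SimpleGraph.mem_edgeSet]
      exact hp.2
    · rintro ⟨e1, w1⟩ h1 ⟨e2, w2⟩ h2 heq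
      simp only [Sym2.eq, Sym2.rel_iff', Prod.mk.injEq, Sum.inl.injEq, Sum.inr.injEq,
        Prod.swap_prod_mk, reduceCtorEq, and_false, false_and, or_false] at heq
      obtain ⟨hw, he⟩ := heq
      subst hw; subst he; rfl
    · intro s hs
      rw [SimpleGraph.mem_edgeFinset] at hs
      induction s using Sym2.ind with
      | _ a b =>
        rw [SimpleGraph.mem_edgeSet] at hs
        rcases a with wa | ea <;> rcases b with wb | eb
        · exact absurd hs id
        · exact ⟨⟨eb, wa⟩, Finset.mem_sigma.mpr ⟨Finset.mem_attach _ _, hs⟩, rfl⟩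
        · exact ⟨⟨ea, wb⟩, Finset.mem_sigma.mpr ⟨Finset.mem_attach _ _, hs⟩, Sym2.eq_swap⟩
        · exact absurd hs id
  rw [← hbij, Finset.card_sigma]
  exact Finset.sum_attach _ _

lemma hypertree_card {r t : ℕ} (T : FinHypergraph W) (hr : 2 ≤ r) (ht : 1 ≤ t)
    (hT : T.IsHypertree) (hu : T.Uniform r) (he : T.edges.card = t) :
    Fintype.card W = (r - 1) * t + 1 := by
  classical
  have hne : ∀ e ∈ T.edges, e.Nonempty := by
    intro e heS
    rw [← Finset.card_pos, hu e heS]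
    omega
  have hts : T.edges.Nonempty := Finset.card_pos.mp (by omega)
  have htree : (incGraph T).IsTree :=
    ⟨inc_connected hT.1 hne hts, inc_isAcyclic hT.2.2⟩
  have hcount := htree.card_edgeFinset
  rw [inc_edge_count] at hcount
  have hsum : ∑ e ∈ T.edges, e.card = t * r := by
    rw [Finset.sum_congr rfl hu, Finset.sum_const, he, smul_eq_mul]
  rw [hsum] at hcount
  have hV : Fintype.card (W ⊕ {e // e ∈ T.edges}) = Fintype.card W + t := by
    rw [Fintype.card_sum, Fintype.card_coe, he]
  rw [hV] at hcount
  have h1 : (r - 1) * t = r * t - t := by rw [Nat.sub_one_mul]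
  have h2 : t ≤ r * t := Nat.le_mul_of_pos_left t (by omega)
  have h3 : r * t = t * r := Nat.mul_comm r t
  omega

end IncGraph

/-- With `n = ⌊(k-1)/(r-1)⌋·(r-1)t`, there is a red-blue coloring (`true` = red,
`false` = blue) of the `r`-subsets of an `n`-set with no red `K_k^{(r)}` and no blue
copy of any `r`-tree with `t` edges. -/
theorem stmt9 (k r t : ℕ) (hk : 2 ≤ k) (hr : 2 ≤ r) (ht : 1 ≤ t) :
    ∃ col : Finset (Fin (((k - 1) / (r - 1)) * ((r - 1) * t))) → Bool,
      (¬ ∃ S : Finset (Fin (((k - 1) / (r - 1)) * ((r - 1) * t))), S.card = k ∧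
          ∀ e ⊆ S, e.card = r → col e = true) ∧
      ∀ (W : Type) [Fintype W] [DecidableEq W] (T : FinHypergraph W),
        T.IsHypertree → T.Uniform r → T.edges.card = t →
        ¬ ∃ φ : W → Fin (((k - 1) / (r - 1)) * ((r - 1) * t)),
            Function.Injective φ ∧ ∀ e ∈ T.edges, col (e.image φ) = false := by 
  classical
  set q := (k - 1) / (r - 1) with hq
  set m := (r - 1) * t with hmdef
  have hm : 0 < m := Nat.mul_pos (by omega) ht
  refine ⟨fun e => decide (∃ u ∈ e, ∃ v ∈ e, u.val / m ≠ v.val / m), ?_, ?_⟩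
  · rintro ⟨S, hScard, hSred⟩
    have hfib : ∀ v ∈ S, v.val / m ∈ Finset.range q := by
      intro v _
      rw [Finset.mem_range]
      exact Nat.div_lt_of_lt_mul (by simpa [Nat.mul_comm] using v.2)
    have hsum := Finset.card_eq_sum_card_fiberwise hfib
    have hex : ∃ b ∈ Finset.range q, r ≤ (S.filter fun v => v.val / m = b).card := by
      by_contra hco
      push_neg at hco
      have hle : S.card ≤ (Finset.range q).card * (r - 1) := by
        rw [hsum]
        apply Finset.sum_le_card_nsmul
        intro b hb
        have := hco b hb
        omega
      rw [Finset.card_range, hScard] at hle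
      have : q * (r - 1) ≤ k - 1 := Nat.div_mul_le_self (k - 1) (r - 1)
      omega
    obtain ⟨b, _, hbr⟩ := hex
    obtain ⟨e, hesub, hecard⟩ := Finset.exists_subset_card_eq hbr
    have hcol := hSred e (hesub.trans (Finset.filter_subset _ _)) hecard
    rw [decide_eq_true_iff] at hcol
    obtain ⟨u, hu, v, hv, huv⟩ := hcol
    have h1 := (Finset.mem_filter.mp (hesub hu)).2
    have h2 := (Finset.mem_filter.mp (hesub hv)).2
    exact huv (h1.trans h2.symm)
  · intro W _ _ T hTree hUnif hcard ⟨φ, hinj, hblue⟩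
    have hcardW : Fintype.card W = (r - 1) * t + 1 := hypertree_card T hr ht hTree hUnif hcard
    -- get a base vertex
    have hts : T.edges.Nonempty := Finset.card_pos.mp (by omega)
    obtain ⟨e₀, he₀⟩ := hts
    obtain ⟨w₀, hw₀⟩ : e₀.Nonempty := by
      rw [← Finset.card_pos, hUnif e₀ he₀]; omega
    set g : W → ℕ := fun w => (φ w).val / m with hgdef
    have hstep : ∀ u w : W, T.adj u w → g u = g w := by
      rintro u w ⟨e, he, hu, hw⟩
      have hb := hblue e he
      rw [decide_eq_false_iff_not] at hb
      push_neg at hb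
      exact hb (φ u) (Finset.mem_image_of_mem φ hu) (φ w) (Finset.mem_image_of_mem φ hw)
    have hconst : ∀ u w : W, Relation.ReflTransGen T.adj u w → g u = g w := by
      intro u w h
      induction h with
      | refl => rfl
      | @tail b c _ hbc ih => exact ih.trans (hstep b c hbc)
    have hle1 : Fintype.card W ≤
        (Finset.univ.filter fun v : Fin (q * m) => v.val / m = g w₀).card := by
      rw [← Finset.card_univ]
      apply Finset.card_le_card_of_injOn φ
      · intro w _
        rw [Finset.mem_coe, Finset.mem_filter]
        exact ⟨Finset.mem_univ _, hconst w w₀ (hTree.1 w w₀)⟩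
      · exact hinj.injOn
    have hle2 : (Finset.univ.filter fun v : Fin (q * m) => v.val / m = g w₀).card ≤ m := by
      have := Finset.card_le_card_of_injOn (fun v : Fin (q * m) => v.val % m)
        (s := Finset.univ.filter fun v : Fin (q * m) => v.val / m = g w₀)
        (t := Finset.range m)
        (fun v _ => Finset.mem_range.mpr (Nat.mod_lt _ hm)) ?_
      · simpa using this
      · intro v1 h1 v2 h2 hmod
        have d1 := (Finset.mem_filter.mp h1).2
        have d2 := (Finset.mem_filter.mp h2).2
        have : v1.val = v2.val := by
          have e1 := Nat.div_add_mod v1.val m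
          have e2 := Nat.div_add_mod v2.val m
          simp only at hmod
          rw [← e1, ← e2, d1, d2, hmod]
        exact Fin.ext this
    omega
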